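/- Define the dual Lipschitz constant L_d(O) = sup over pairs of distinct density operators ρ ≠ σ of Tr[O(ρ−σ)]/W_1^d(ρ,σ). If d is continuous and the 2-norm is Lipschitz w.r.t. d, then L_d(O) equals the supremum restricted to pure states: L_d(O) = sup_{ψ≠φ} Tr[O(|ψ⟩⟨ψ| − |φ⟩⟨φ|)] / d(ψ,φ). -/

import Mathlib

open scoped BigOperators ComplexOrder
open Matrix

noncomputable section

abbrev QV (D : ℕ) := EuclideanSpace ℂ (Fin D)

def qproj {D : ℕ} (ψ : QV D) : Matrix (Fin D) (Fin D) ℂ :=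
  Matrix.of fun i j => ψ i * (starRingEnd ℂ) (ψ j)

/-- A quantum transport plan between `ρ` and `σ`. -/
structure TPlan (D : ℕ) (ρ σ : Matrix (Fin D) (Fin D) ℂ) where
  n : ℕ
  q : Fin n → ℝ
  ψ : Fin n → QV D
  φ : Fin n → QV D
  q_pos : ∀ j, 0 < q j
  ψ_unit : ∀ j, ‖ψ j‖ = 1
  φ_unit : ∀ j, ‖φ j‖ = 1
  margL : ∑ j, (q j : ℂ) • qproj (ψ j) = ρ
  margR : ∑ j, (q j : ℂ) • qproj (φ j) = σ

/-- p-th order transport cost of a plan (before the 1/p root). -/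
def Tcost {D : ℕ} (d : QV D → QV D → ℝ) (p : ℝ) {ρ σ : Matrix (Fin D) (Fin D) ℂ}
    (Q : TPlan D ρ σ) : ℝ :=
  ∑ j, Q.q j * d (Q.ψ j) (Q.φ j) ^ p

/-- The order-p quantum Wasserstein distance. -/
def Wp {D : ℕ} (d : QV D → QV D → ℝ) (p : ℝ) (ρ σ : Matrix (Fin D) (Fin D) ℂ) : ℝ :=
  sInf { x | ∃ Q : TPlan D ρ σ, x = (Tcost d p Q) ^ (1/p) }

/-- The infinite-order quantum Wasserstein distance. -/
def Winf {D : ℕ} (d : QV D → QV D → ℝ) (ρ σ : Matrix (Fin D) (Fin D) ℂ) : ℝ :=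
  sInf { x | ∃ Q : TPlan D ρ σ, x = ⨆ j, d (Q.ψ j) (Q.φ j) }

def IsDensity {D : ℕ} (ρ : Matrix (Fin D) (Fin D) ℂ) : Prop :=
  ρ.PosSemidef ∧ ρ.trace = 1

/-- Hilbert–Schmidt (Frobenius) norm. -/
def frob {D : ℕ} (A : Matrix (Fin D) (Fin D) ℂ) : ℝ :=
  Real.sqrt (∑ i, ∑ j, ‖A i j‖ ^ 2)

/-- Action of a matrix on a vector of the Euclidean space. -/
def act {D : ℕ} (U : Matrix (Fin D) (Fin D) ℂ) (ψ : QV D) : QV D :=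
  (EuclideanSpace.equiv (Fin D) ℂ).symm (U.mulVec (EuclideanSpace.equiv (Fin D) ℂ ψ))

/-- Dual Lipschitz constant of an observable. -/
def Ld {D : ℕ} (d : QV D → QV D → ℝ) (O : Matrix (Fin D) (Fin D) ℂ) : ℝ :=
  sSup { x | ∃ ρ σ : Matrix (Fin D) (Fin D) ℂ, IsDensity ρ ∧ IsDensity σ ∧ ρ ≠ σ ∧
    x = ((O * (ρ - σ)).trace).re / Wp d 1 ρ σ }

/-- Double-dual norm. -/
def DWnorm {D : ℕ} (d : QV D → QV D → ℝ) (X : Matrix (Fin D) (Fin D) ℂ) : ℝ :=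
  sSup { x | ∃ O : Matrix (Fin D) (Fin D) ℂ, O.IsHermitian ∧ O.trace = 0 ∧ Ld d O ≤ 1 ∧
    x = ((O * X).trace).re }

/-- Trace (nuclear) norm. -/
def traceNorm {D : ℕ} (A : Matrix (Fin D) (Fin D) ℂ) : ℝ :=
  ((Matrix.posSemidef_conjTranspose_mul_self A).1.eigenvectorUnitary.1 *
    Matrix.diagonal (((↑) : ℝ → ℂ) ∘ Real.sqrt ∘ (Matrix.posSemidef_conjTranspose_mul_self A).1.eigenvalues) *
    (star (Matrix.posSemidef_conjTranspose_mul_self A).1.eigenvectorUnitary : Matrix (Fin D) (Fin D) ℂ)).trace.re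

namespace QWAux

def toEucL {D : ℕ} : Matrix (Fin D) (Fin D) ℂ →ₗ[ℂ] EuclideanSpace ℂ (Fin D × Fin D) where
  toFun A := WithLp.toLp 2 (fun p => A p.1 p.2)
  map_add' := by intros; rfl
  map_smul' := by intros; rfl

@[simp] lemma toEucL_apply {D : ℕ} (A : Matrix (Fin D) (Fin D) ℂ) (p : Fin D × Fin D) :
    (toEucL A).ofLp p = A p.1 p.2 := rfl

lemma frob_eq_norm {D : ℕ} (A : Matrix (Fin D) (Fin D) ℂ) : frob A = ‖toEucL A‖ := by
  rw [EuclideanSpace.norm_eq, frob]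
  congr 1
  rw [Fintype.sum_prod_type]
  simp [toEucL_apply]

lemma frob_nonneg {D : ℕ} (A : Matrix (Fin D) (Fin D) ℂ) : 0 ≤ frob A :=
  Real.sqrt_nonneg _

lemma frob_pos {D : ℕ} {A : Matrix (Fin D) (Fin D) ℂ} (h : A ≠ 0) : 0 < frob A := by
  rw [frob_eq_norm]
  refine norm_pos_iff.mpr ?_
  intro h0
  apply h
  ext i j
  have := congrArg (fun v => v.ofLp (i, j)) h0
  simpa [toEucL_apply] using this

lemma frob_conjT {D : ℕ} (A : Matrix (Fin D) (Fin D) ℂ) : frob Aᴴ = frob A := by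
  rw [frob, frob, Finset.sum_comm]
  simp [Matrix.conjTranspose_apply]

lemma trace_mul_re_le {D : ℕ} (O X : Matrix (Fin D) (Fin D) ℂ) :
    ((O * X).trace).re ≤ frob O * frob X := by
  have h1 : (O * X).trace = inner (𝕜 := ℂ) (toEucL Oᴴ) (toEucL X) := by
    rw [PiLp.inner_apply, Matrix.trace, Fintype.sum_prod_type]
    simp only [Matrix.diag, Matrix.mul_apply, toEucL_apply,
      Matrix.conjTranspose_apply, RCLike.inner_apply, starRingEnd_self_apply, WithLp.ofLp_toLp]
    rw [Finset.sum_comm]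
    simp [mul_comm]
  calc ((O * X).trace).re ≤ ‖(O * X).trace‖ := Complex.re_le_norm _
    _ = ‖inner (𝕜 := ℂ) (toEucL Oᴴ) (toEucL X)‖ := by rw [h1]
    _ ≤ ‖toEucL (D := D) Oᴴ‖ * ‖toEucL (D := D) X‖ := norm_inner_le_norm _ _
    _ = frob O * frob X := by rw [← frob_eq_norm, ← frob_eq_norm, frob_conjT]

lemma qproj_trace {D : ℕ} {ψ : QV D} (h : ‖ψ‖ = 1) : (qproj ψ).trace = 1 := by
  have hn : ∑ i, ‖ψ i‖ ^ 2 = 1 := by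
    have := EuclideanSpace.norm_eq ψ
    rw [h] at this
    have h2 : (0:ℝ) ≤ ∑ i, ‖ψ i‖ ^ 2 := Finset.sum_nonneg fun i _ => sq_nonneg _
    nlinarith [Real.sq_sqrt h2, this]
  rw [Matrix.trace]
  have : ∀ i, (qproj ψ).diag i = ((‖ψ i‖ ^ 2 : ℝ) : ℂ) := by
    intro i
    simp [qproj, Matrix.diag, Complex.mul_conj', Complex.mul_conj, Complex.normSq_eq_norm_sq]
  rw [Finset.sum_congr rfl fun i _ => this i, ← Complex.ofReal_sum, hn, Complex.ofReal_one]

lemma qproj_posSemidef {D : ℕ} (ψ : QV D) : (qproj ψ).PosSemidef := by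
  rw [Matrix.posSemidef_iff_dotProduct_mulVec]
  constructor
  · ext i j
    simp [qproj, Matrix.conjTranspose_apply, mul_comm]
  · intro x
    have h1 : (star x) ⬝ᵥ (qproj ψ).mulVec x
        = (∑ i, (starRingEnd ℂ) (x i) * ψ i) * (∑ j, (starRingEnd ℂ) (ψ j) * x j) := by
      rw [Finset.sum_mul_sum]
      simp only [dotProduct, Matrix.mulVec, qproj, Matrix.of_apply, Finset.mul_sum,
        Pi.star_apply, RCLike.star_def]
      exact Finset.sum_congr rfl fun i _ => Finset.sum_congr rfl fun j _ => by ring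
    have h2 : (∑ i, (starRingEnd ℂ) (x i) * ψ i)
        = (starRingEnd ℂ) (∑ j, (starRingEnd ℂ) (ψ j) * x j) := by
      rw [map_sum]
      exact Finset.sum_congr rfl fun j _ => by simp [mul_comm]
    rw [h1, h2, Complex.conj_mul']
    rw [← Complex.ofReal_pow]
    exact_mod_cast Complex.zero_le_real.mpr (by positivity)

lemma qproj_isDensity {D : ℕ} {ψ : QV D} (h : ‖ψ‖ = 1) : IsDensity (qproj ψ) :=
  ⟨qproj_posSemidef ψ, qproj_trace h⟩

lemma plan_diff {D : ℕ} {ρ σ : Matrix (Fin D) (Fin D) ℂ} (Q : TPlan D ρ σ) :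
    ρ - σ = ∑ j, (Q.q j : ℂ) • (qproj (Q.ψ j) - qproj (Q.φ j)) := by
  have h : (∑ j, (Q.q j : ℂ) • qproj (Q.ψ j)) - (∑ j, (Q.q j : ℂ) • qproj (Q.φ j))
      = ∑ j, (Q.q j : ℂ) • (qproj (Q.ψ j) - qproj (Q.φ j)) := by
    rw [← Finset.sum_sub_distrib]
    exact Finset.sum_congr rfl fun j _ => (smul_sub _ _ _).symm
  rw [Q.margL, Q.margR] at h
  exact h

lemma trace_decomp {D : ℕ} (O : Matrix (Fin D) (Fin D) ℂ) {ρ σ : Matrix (Fin D) (Fin D) ℂ}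
    (Q : TPlan D ρ σ) :
    ((O * (ρ - σ)).trace).re
      = ∑ j, Q.q j * ((O * (qproj (Q.ψ j) - qproj (Q.φ j))).trace).re := by
  rw [plan_diff Q, Finset.mul_sum, Matrix.trace_sum, Complex.re_sum]
  refine Finset.sum_congr rfl fun j _ => ?_
  rw [Matrix.mul_smul, Matrix.trace_smul, smul_eq_mul]
  simp [Complex.mul_re]

def singlePlan {D : ℕ} {ψ φ : QV D} (hψ : ‖ψ‖ = 1) (hφ : ‖φ‖ = 1) :
    TPlan D (qproj ψ) (qproj φ) where
  n := 1
  q := fun _ => 1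
  ψ := fun _ => ψ
  φ := fun _ => φ
  q_pos := fun _ => one_pos
  ψ_unit := fun _ => hψ
  φ_unit := fun _ => hφ
  margL := by simp
  margR := by simp

lemma two_le_D {D : ℕ} {ρ σ : Matrix (Fin D) (Fin D) ℂ} (hρ : IsDensity ρ) (hσ : IsDensity σ)
    (hne : ρ ≠ σ) : 2 ≤ D := by
  by_contra h
  push_neg at h
  interval_cases D
  · have := hρ.2
    simp [Matrix.trace] at this
  · apply hne
    ext i j
    have h1 : ρ.trace = ρ 0 0 := by simp [Matrix.trace, Matrix.diag]
    have h2 : σ.trace = σ 0 0 := by simp [Matrix.trace, Matrix.diag]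
    have h3 : ρ 0 0 = σ 0 0 := by rw [← h1, ← h2, hρ.2, hσ.2]
    have hi : i = 0 := Subsingleton.elim _ _
    have hj : j = 0 := Subsingleton.elim _ _
    rw [hi, hj, h3]

lemma trace_swap {D : ℕ} (O A B : Matrix (Fin D) (Fin D) ℂ) :
    ((O * (B - A)).trace).re = -((O * (A - B)).trace).re := by
  rw [show B - A = -(A - B) by rw [neg_sub], Matrix.mul_neg, Matrix.trace_neg, Complex.neg_re]

end QWAux

open QWAux

/-- The dual Lipschitz constant is attained on pure states. -/
theorem dual_lipschitz_on_pure_states {D : ℕ} (d : QV D → QV D → ℝ)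
    (hdnn : ∀ a b : QV D, 0 ≤ d a b)
    (hdph : ∀ a b a' b' : QV D, qproj a = qproj a' → qproj b = qproj b' → d a b = d a' b')
    (hdcont : Continuous fun x : QV D × QV D => d x.1 x.2)
    (C : ℝ) (hC : 0 < C)
    (hLip : ∀ ψ φ : QV D, ‖ψ‖ = 1 → ‖φ‖ = 1 → frob (qproj ψ - qproj φ) ≤ C * d ψ φ)
    (O : Matrix (Fin D) (Fin D) ℂ) (hO : O.IsHermitian) :
    Ld d O = sSup { x | ∃ ψ φ : QV D, ‖ψ‖ = 1 ∧ ‖φ‖ = 1 ∧ qproj ψ ≠ qproj φ ∧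
        x = ((O * (qproj ψ - qproj φ)).trace).re / d ψ φ } := by
  unfold Ld
  set Sp : Set ℝ := { x | ∃ ψ φ : QV D, ‖ψ‖ = 1 ∧ ‖φ‖ = 1 ∧ qproj ψ ≠ qproj φ ∧
      x = ((O * (qproj ψ - qproj φ)).trace).re / d ψ φ } with hSpdef
  set Sd : Set ℝ := { x | ∃ ρ σ : Matrix (Fin D) (Fin D) ℂ, IsDensity ρ ∧ IsDensity σ ∧ ρ ≠ σ ∧
      x = ((O * (ρ - σ)).trace).re / Wp d 1 ρ σ } with hSddef
  -- positivity of d on distinct pure states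
  have hdpos : ∀ ψ φ : QV D, ‖ψ‖ = 1 → ‖φ‖ = 1 → qproj ψ ≠ qproj φ → 0 < d ψ φ := by
    intro ψ φ hψ hφ hne
    have h1 := hLip ψ φ hψ hφ
    have h2 : 0 < frob (qproj ψ - qproj φ) := frob_pos (sub_ne_zero.mpr hne)
    nlinarith [hdnn ψ φ]
  -- Tcost with p = 1
  have hTc : ∀ {ρ σ : Matrix (Fin D) (Fin D) ℂ} (Q : TPlan D ρ σ),
      Tcost d 1 Q = ∑ j, Q.q j * d (Q.ψ j) (Q.φ j) := by
    intro ρ σ Q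
    exact Finset.sum_congr rfl fun j _ => by rw [Real.rpow_one]
  have hTcnn : ∀ {ρ σ : Matrix (Fin D) (Fin D) ℂ} (Q : TPlan D ρ σ), 0 ≤ Tcost d 1 Q := by
    intro ρ σ Q
    rw [hTc Q]
    exact Finset.sum_nonneg fun j _ => mul_nonneg (Q.q_pos j).le (hdnn _ _)
  -- Wp nonneg
  have hWnn : ∀ ρ σ : Matrix (Fin D) (Fin D) ℂ, 0 ≤ Wp d 1 ρ σ := by
    intro ρ σ
    apply Real.sInf_nonneg
    rintro x ⟨Q, rfl⟩
    exact Real.rpow_nonneg (hTcnn Q) _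
  -- frob lower bound on transport cost
  have hfT : ∀ {ρ σ : Matrix (Fin D) (Fin D) ℂ} (Q : TPlan D ρ σ),
      frob (ρ - σ) ≤ C * Tcost d 1 Q := by
    intro ρ σ Q
    calc frob (ρ - σ) = ‖toEucL (ρ - σ)‖ := frob_eq_norm _
      _ = ‖∑ j, (Q.q j : ℂ) • toEucL (qproj (Q.ψ j) - qproj (Q.φ j))‖ := by
          rw [plan_diff Q, map_sum]
          simp only [_root_.map_smul]
      _ ≤ ∑ j, ‖(Q.q j : ℂ) • toEucL (qproj (Q.ψ j) - qproj (Q.φ j))‖ := norm_sum_le _ _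
      _ = ∑ j, Q.q j * frob (qproj (Q.ψ j) - qproj (Q.φ j)) := by
          refine Finset.sum_congr rfl fun j _ => ?_
          rw [norm_smul, ← frob_eq_norm, Complex.norm_real, Real.norm_eq_abs,
            abs_of_pos (Q.q_pos j)]
      _ ≤ ∑ j, Q.q j * (C * d (Q.ψ j) (Q.φ j)) :=
          Finset.sum_le_sum fun j _ => mul_le_mul_of_nonneg_left
            (hLip _ _ (Q.ψ_unit j) (Q.φ_unit j)) (Q.q_pos j).le
      _ = C * Tcost d 1 Q := by
          rw [hTc Q, Finset.mul_sum]
          exact Finset.sum_congr rfl fun j _ => by ring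
  -- frob lower bound on Wp
  have hWlb : ∀ (ρ σ : Matrix (Fin D) (Fin D) ℂ), Nonempty (TPlan D ρ σ) →
      frob (ρ - σ) ≤ C * Wp d 1 ρ σ := by
    rintro ρ σ ⟨Q0⟩
    have hb : frob (ρ - σ) / C ≤ Wp d 1 ρ σ := by
      rw [Wp]
      have hm : (Tcost d 1 Q0) ^ ((1:ℝ)/1)
          ∈ {x | ∃ Q : TPlan D ρ σ, x = (Tcost d 1 Q) ^ ((1:ℝ)/1)} := ⟨Q0, rfl⟩
      apply le_csInf ⟨_, hm⟩
      rintro x ⟨Q, rfl⟩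
      rw [one_div_one, Real.rpow_one, div_le_iff₀ hC]
      have := hfT Q
      linarith
    rw [div_le_iff₀ hC] at hb
    linarith
  have hWpos : ∀ {ρ σ : Matrix (Fin D) (Fin D) ℂ}, ρ ≠ σ → Nonempty (TPlan D ρ σ) →
      0 < Wp d 1 ρ σ := by
    intro ρ σ hne hpl
    have h1 := hWlb ρ σ hpl
    have h2 : 0 < frob (ρ - σ) := frob_pos (sub_ne_zero.mpr hne)
    nlinarith
  -- bound on pure elements
  have hSpb : ∀ x ∈ Sp, x ≤ C * frob O := by
    rintro x ⟨ψ, φ, hψ, hφ, hne, rfl⟩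
    have hd := hdpos ψ φ hψ hφ hne
    rw [div_le_iff₀ hd]
    nlinarith [trace_mul_re_le O (qproj ψ - qproj φ), hLip ψ φ hψ hφ, frob_nonneg O,
      frob_nonneg (qproj ψ - qproj φ)]
  have hSpbdd : BddAbove Sp := ⟨C * frob O, hSpb⟩
  -- bound on density elements
  have hSdb : ∀ x ∈ Sd, x ≤ C * frob O := by
    rintro x ⟨ρ, σ, hρ, hσ, hne, rfl⟩
    by_cases hpl : Nonempty (TPlan D ρ σ)
    · have hW := hWpos hne hpl
      rw [div_le_iff₀ hW]
      nlinarith [trace_mul_re_le O (ρ - σ), hWlb ρ σ hpl, frob_nonneg O, frob_nonneg (ρ - σ)]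
    · have hempty : { x | ∃ Q : TPlan D ρ σ, x = (Tcost d 1 Q) ^ ((1:ℝ)/1) } = ∅ := by
        ext y
        simp only [Set.mem_setOf_eq, Set.mem_empty_iff_false, iff_false]
        rintro ⟨Q, -⟩
        exact hpl ⟨Q⟩
      have : Wp d 1 ρ σ = 0 := by rw [Wp, hempty, Real.sInf_empty]
      rw [this, div_zero]
      exact mul_nonneg hC.le (frob_nonneg O)
  have hSdbdd : BddAbove Sd := ⟨C * frob O, hSdb⟩
  -- nonneg of sSup Sp when nonempty
  have hSp0 : Sp.Nonempty → 0 ≤ sSup Sp := by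
    rintro ⟨x, ψ, φ, hψ, hφ, hne, rfl⟩
    rcases le_or_gt 0 (((O * (qproj ψ - qproj φ)).trace).re) with ht | ht
    · exact le_csSup_of_le hSpbdd ⟨ψ, φ, hψ, hφ, hne, rfl⟩
        (div_nonneg ht (hdnn ψ φ))
    · refine le_csSup_of_le hSpbdd (⟨φ, ψ, hφ, hψ, hne.symm, rfl⟩ :
        ((O * (qproj φ - qproj ψ)).trace).re / d φ ψ ∈ Sp) ?_
      rw [trace_swap]
      exact div_nonneg (by linarith) (hdnn φ ψ)
  -- Sp nonempty whenever distinct densities exist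
  have hpure_ne : ∀ {ρ σ : Matrix (Fin D) (Fin D) ℂ}, IsDensity ρ → IsDensity σ → ρ ≠ σ →
      Sp.Nonempty := by
    intro ρ σ hρ hσ hne
    have hD := two_le_D hρ hσ hne
    have h01 : (⟨0, by omega⟩ : Fin D) ≠ ⟨1, by omega⟩ := by
      simp [Fin.ext_iff]
    set e0 : QV D := EuclideanSpace.single ⟨0, by omega⟩ 1 with he0
    set e1 : QV D := EuclideanSpace.single ⟨1, by omega⟩ 1 with he1
    have h0 : ‖e0‖ = 1 := by rw [he0, EuclideanSpace.norm_single]; norm_num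
    have h1 : ‖e1‖ = 1 := by rw [he1, EuclideanSpace.norm_single]; norm_num
    have hne2 : qproj e0 ≠ qproj e1 := by
      intro h
      have h00 : qproj e0 ⟨0, by omega⟩ ⟨0, by omega⟩ = qproj e1 ⟨0, by omega⟩ ⟨0, by omega⟩ := by
        rw [h]
      simp [qproj, he0, he1, EuclideanSpace.single_apply, h01.symm] at h00
    exact ⟨_, e0, e1, h0, h1, hne2, rfl⟩
  -- prove equality
  apply le_antisymm
  · -- sSup Sd ≤ sSup Sp
    apply Real.sSup_le
    · rintro x ⟨ρ, σ, hρ, hσ, hne, rfl⟩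
      have hSpne := hpure_ne hρ hσ hne
      have hS0 := hSp0 hSpne
      by_cases hpl : Nonempty (TPlan D ρ σ)
      · have hW := hWpos hne hpl
        have key : ∀ Q : TPlan D ρ σ,
            ((O * (ρ - σ)).trace).re ≤ sSup Sp * Tcost d 1 Q := by
          intro Q
          rw [trace_decomp O Q, hTc Q, Finset.mul_sum]
          refine Finset.sum_le_sum fun j _ => ?_
          rw [show sSup Sp * (Q.q j * d (Q.ψ j) (Q.φ j))
              = Q.q j * (sSup Sp * d (Q.ψ j) (Q.φ j)) by ring]
          refine mul_le_mul_of_nonneg_left ?_ (Q.q_pos j).le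
          by_cases hj : qproj (Q.ψ j) = qproj (Q.φ j)
          · rw [hj, sub_self, Matrix.mul_zero, Matrix.trace_zero]
            simp only [Complex.zero_re]
            exact mul_nonneg hS0 (hdnn _ _)
          · have hdj := hdpos _ _ (Q.ψ_unit j) (Q.φ_unit j) hj
            have hmem : ((O * (qproj (Q.ψ j) - qproj (Q.φ j))).trace).re / d (Q.ψ j) (Q.φ j)
                ∈ Sp := ⟨Q.ψ j, Q.φ j, Q.ψ_unit j, Q.φ_unit j, hj, rfl⟩
            have := le_csSup hSpbdd hmem
            rw [div_le_iff₀ hdj] at this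
            linarith [mul_comm (sSup Sp) (d (Q.ψ j) (Q.φ j))]
        rcases lt_or_ge 0 (sSup Sp) with hS | hS
        · have hWge : ((O * (ρ - σ)).trace).re / sSup Sp ≤ Wp d 1 ρ σ := by
            rw [Wp]
            have hm : (Tcost d 1 hpl.some) ^ ((1:ℝ)/1)
                ∈ {x | ∃ Q : TPlan D ρ σ, x = (Tcost d 1 Q) ^ ((1:ℝ)/1)} := ⟨hpl.some, rfl⟩
            apply le_csInf ⟨_, hm⟩
            rintro y ⟨Q, rfl⟩
            rw [one_div_one, Real.rpow_one, div_le_iff₀ hS]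
            have := key Q
            linarith [mul_comm (Tcost d 1 Q) (sSup Sp)]
          rw [div_le_iff₀ hW]
          rw [div_le_iff₀ hS] at hWge
          linarith [mul_comm (Wp d 1 ρ σ) (sSup Sp)]
        · have hS' : sSup Sp = 0 := le_antisymm hS hS0
          obtain ⟨Q⟩ := hpl
          have hk := key Q
          rw [hS', zero_mul] at hk
          have : ((O * (ρ - σ)).trace).re / Wp d 1 ρ σ ≤ 0 :=
            div_nonpos_of_nonpos_of_nonneg hk hW.le
          linarith
      · have hempty : { x | ∃ Q : TPlan D ρ σ, x = (Tcost d 1 Q) ^ ((1:ℝ)/1) } = ∅ := by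
          ext y
          simp only [Set.mem_setOf_eq, Set.mem_empty_iff_false, iff_false]
          rintro ⟨Q, -⟩
          exact hpl ⟨Q⟩
        have hW0 : Wp d 1 ρ σ = 0 := by rw [Wp, hempty, Real.sInf_empty]
        rw [hW0, div_zero]
        exact hS0
    · rcases Set.eq_empty_or_nonempty Sp with h | h
      · rw [h, Real.sSup_empty]
      · exact hSp0 h
  · -- sSup Sp ≤ sSup Sd
    have hSd0 : Sd.Nonempty → 0 ≤ sSup Sd := by
      rintro ⟨x, ρ, σ, hρ, hσ, hne, rfl⟩
      rcases le_or_gt 0 (((O * (ρ - σ)).trace).re) with ht | ht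
      · exact le_csSup_of_le hSdbdd ⟨ρ, σ, hρ, hσ, hne, rfl⟩
          (div_nonneg ht (hWnn ρ σ))
      · refine le_csSup_of_le hSdbdd (⟨σ, ρ, hσ, hρ, hne.symm, rfl⟩ :
          ((O * (σ - ρ)).trace).re / Wp d 1 σ ρ ∈ Sd) ?_
        rw [trace_swap]
        exact div_nonneg (by linarith) (hWnn σ ρ)
    apply Real.sSup_le
    · rintro x ⟨ψ, φ, hψ, hφ, hne, rfl⟩
      have hd := hdpos ψ φ hψ hφ hne
      have hρ := qproj_isDensity hψ
      have hσ := qproj_isDensity hφ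
      have hpl : Nonempty (TPlan D (qproj ψ) (qproj φ)) := ⟨singlePlan hψ hφ⟩
      have hW := hWpos hne hpl
      have hWle : Wp d 1 (qproj ψ) (qproj φ) ≤ d ψ φ := by
        rw [Wp]
        apply csInf_le ⟨0, ?_⟩ ?_
        · rintro y ⟨Q, rfl⟩
          exact Real.rpow_nonneg (hTcnn Q) _
        · refine ⟨singlePlan hψ hφ, ?_⟩
          rw [one_div_one, Real.rpow_one, hTc]
          simp [singlePlan]
          show d ψ φ = ((Finset.univ : Finset (Fin 1)).card : ℝ) * d ψ φ
          simp
      rcases le_or_gt (((O * (qproj ψ - qproj φ)).trace).re) 0 with ht | ht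
      · have hx : ((O * (qproj ψ - qproj φ)).trace).re / d ψ φ ≤ 0 :=
          div_nonpos_of_nonpos_of_nonneg ht hd.le
        refine le_trans hx (hSd0 ?_)
        exact ⟨_, qproj ψ, qproj φ, hρ, hσ, hne, rfl⟩
      · have hmem : ((O * (qproj ψ - qproj φ)).trace).re / Wp d 1 (qproj ψ) (qproj φ) ∈ Sd :=
          ⟨qproj ψ, qproj φ, hρ, hσ, hne, rfl⟩
        refine le_csSup_of_le hSdbdd hmem ?_
        exact div_le_div_of_nonneg_left ht.le hW hWle
    · rcases Set.eq_empty_or_nonempty Sd with h | h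
      · rw [h, Real.sSup_empty]
      · exact hSd0 h
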